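/- Define the multiplicative function ð_k by ð_k(p^a) = 2 if a = 1 and ð_k(p^a) = (a+1)^k if a ≠ 1, for each prime p and a ≥ 1. Then for any positive integers a, b and k ≥ 2, τ(a)·τ(b) ≤ ð_2(a·b), where τ is the number-of-divisors function. -/

import Mathlib

open Nat Finset

/-- The multiplicative function `ð_k`, determined on prime powers by
`ð_k(p) = 2` and `ð_k(p^a) = (a+1)^k` for `a ≠ 1`. -/
def eth (k : ℕ) (n : ℕ) : ℕ :=
  ∏ p ∈ n.primeFactors, (if n.factorization p = 1 then 2 else (n.factorization p + 1) ^ k)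

lemma card_div_eq (a : ℕ) (ha : a ≠ 0) (s : Finset ℕ) (hs : a.primeFactors ⊆ s) :
    (Nat.divisors a).card = ∏ p ∈ s, (a.factorization p + 1) := by
  rw [Nat.card_divisors ha]
  
  refine Finset.prod_subset ?_ ?_
  · exact hs
  · intro x _ hx
    have : ¬(x.Prime ∧ x ∣ a) := by simpa [Nat.mem_primeFactors, ha] using hx
    simp [Nat.factorization_eq_zero_iff]
    tauto

theorem stmt_4 (a b : ℕ) (ha : 0 < a) (hb : 0 < b) :
    (Nat.divisors a).card * (Nat.divisors b).card ≤ eth 2 (a * b) := by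
  have ha' := ha.ne'
  have hb' := hb.ne'
  have hab : a * b ≠ 0 := mul_ne_zero ha' hb'
  rw [card_div_eq a ha' (a * b).primeFactors
      (Nat.primeFactors_mono (Dvd.intro b rfl) hab),
    card_div_eq b hb' (a * b).primeFactors
      (Nat.primeFactors_mono (Dvd.intro_left a rfl) hab),
    ← Finset.prod_mul_distrib, eth]
  refine Finset.prod_le_prod' fun p _ => ?_
  rw [Nat.factorization_mul ha' hb']
  set α := a.factorization p
  set β := b.factorization p
  rw [Finsupp.add_apply]
  split_ifs with h
  · have : α = 0 ∨ α = 1 := by omega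
    rcases this with h'|h' <;> simp [h'] <;> omega
  · nlinarith
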